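/- Let H be a real Hilbert space with orthonormal basis {ψ_j}_{j∈ℕ}, let v ∈ H with coefficients d_j = ⟨v, ψ_j⟩, and let α_j > 0 with inf_j α_j > 0. Then the functional u ↦ (1/2)‖u − v‖² + Σ_j α_j |⟨u, ψ_j⟩| attains its unique minimum over H at u* = Σ_j S_{α_j}(d_j) ψ_j, where S_β denotes soft thresholding with threshold β. -/
import Mathlib


open scoped RealInnerProductSpace ENNReal

noncomputable def softThr (β x : ℝ) : ℝ := Real.sign x * max (|x| - β) 0

lemma softThr_eq_zero {β x : ℝ} (h : |x| ≤ β) : softThr β x = 0 := by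
  unfold softThr; rw [max_eq_right (by linarith), mul_zero]

lemma softThr_eq_pos {β x : ℝ} (hβ : 0 < β) (h : β < x) : softThr β x = x - β := by
  unfold softThr
  rw [Real.sign_of_pos (by linarith), abs_of_pos (by linarith),
    max_eq_left (by linarith), one_mul]

lemma softThr_eq_neg {β x : ℝ} (hβ : 0 < β) (h : x < -β) : softThr β x = x + β := by
  unfold softThr
  rw [Real.sign_of_neg (by linarith), abs_of_neg (by linarith),
    max_eq_left (by linarith)]
  ring

lemma softThr_key {β : ℝ} (d c : ℝ) (hβ : 0 < β) :
    (1/2)*(softThr β d - d)^2 + β*|softThr β d| + (1/2)*(c - softThr β d)^2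
      ≤ (1/2)*(c - d)^2 + β*|c| := by
  rcases le_or_gt (|d|) β with h | h
  · rw [softThr_eq_zero h]
    rcases abs_cases c with ⟨hc, hc'⟩ | ⟨hc, hc'⟩ <;>
      rcases abs_cases d with ⟨hd, hd'⟩ | ⟨hd, hd'⟩ <;>
      rw [hd] at h <;> rw [abs_zero, hc] <;> nlinarith
  · rcases lt_trichotomy d 0 with hd | hd | hd
    · have hdn : d < -β := by rw [abs_of_neg hd] at h; linarith
      rw [softThr_eq_neg hβ hdn, abs_of_neg (by linarith : d + β < 0)]
      rcases abs_cases c with ⟨hc, hc'⟩ | ⟨hc, hc'⟩ <;> rw [hc] <;> nlinarith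
    · simp [hd, abs_of_nonneg] at h; linarith
    · have hdp : β < d := by rwa [abs_of_pos hd] at h
      rw [softThr_eq_pos hβ hdp, abs_of_pos (by linarith : (0:ℝ) < d - β)]
      rcases abs_cases c with ⟨hc, hc'⟩ | ⟨hc, hc'⟩ <;> rw [hc] <;> nlinarith

lemma softThr_val_le {β : ℝ} (d : ℝ) (hβ : 0 < β) :
    (1/2)*(softThr β d - d)^2 + β*|softThr β d| ≤ d^2 := by
  rcases le_or_gt (|d|) β with h | h
  · rw [softThr_eq_zero h]; simp; nlinarith [abs_nonneg d, sq_abs d]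
  · rcases lt_trichotomy d 0 with hd | hd | hd
    · have hdn : d < -β := by rw [abs_of_neg hd] at h; linarith
      rw [softThr_eq_neg hβ hdn, abs_of_neg (by linarith : d + β < 0)]
      nlinarith
    · simp [hd, abs_of_nonneg] at h; linarith
    · have hdp : β < d := by rwa [abs_of_pos hd] at h
      rw [softThr_eq_pos hβ hdp, abs_of_pos (by linarith : (0:ℝ) < d - β)]
      nlinarith

lemma softThr_abs_le {β : ℝ} (d : ℝ) (hβ : 0 < β) : |softThr β d| ≤ |d| := by
  unfold softThr
  rw [abs_mul]
  rcases le_or_gt (|d|) β with h | h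
  · rw [max_eq_right (by linarith)]; simp [abs_nonneg]
  · rw [max_eq_left (by linarith), abs_of_nonneg (by linarith : (0:ℝ) ≤ |d| - β)]
    have h1 : |Real.sign d| ≤ 1 := by
      rcases Real.sign_apply_eq d with h' | h' | h' <;> rw [h'] <;> norm_num
    calc |Real.sign d| * (|d| - β) ≤ 1 * (|d| - β) := by
          apply mul_le_mul_of_nonneg_right h1; linarith
      _ ≤ |d| := by linarith

/-- In a real Hilbert space with orthonormal basis `{ψ_j}`, with `v ∈ H`, `d_j = ⟨v, ψ_j⟩`,
and `α_j > 0` bounded below by a positive constant, the functional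
`u ↦ (1/2)‖u − v‖² + Σ_j α_j |⟨u, ψ_j⟩|` (penalty valued in `[0, ∞]`) attains its unique
minimum over `H` at `u* = Σ_j S_{α_j}(d_j) ψ_j`. -/
theorem stmt_4 {H : Type*} [NormedAddCommGroup H] [InnerProductSpace ℝ H] [CompleteSpace H]
    (ψ : HilbertBasis ℕ ℝ H) (v : H) (α : ℕ → ℝ) (hα : ∀ j, 0 < α j)
    (a : ℝ) (ha : 0 < a) (haα : ∀ j, a ≤ α j)
    (d : ℕ → ℝ) (hd : ∀ j, d j = ⟪v, ψ j⟫)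
    (Ψ : H → ℝ≥0∞)
    (hΨ : ∀ u, Ψ u = ENNReal.ofReal ((1 / 2) * ‖u - v‖ ^ 2) +
      ∑' j, ENNReal.ofReal (α j * |⟪u, ψ j⟫|))
    (ustar : H) (hustar : ustar = ∑' j, softThr (α j) (d j) • (ψ j : H)) :
    ∀ u : H, Ψ ustar ≤ Ψ u ∧ (Ψ u = Ψ ustar → u = ustar) := by
  classical
  set s : ℕ → ℝ := fun j => softThr (α j) (d j) with hs
  have key2 : ∀ x : ℝ, ‖x‖ ^ (2 : ℝ≥0∞).toReal = x ^ 2 := by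
    intro x
    rw [ENNReal.toReal_ofNat, Real.norm_eq_abs,
      show ((2 : ℝ)) = ((2 : ℕ) : ℝ) by norm_num, Real.rpow_natCast, sq_abs]
  have h2 : (0 : ℝ) < (2 : ℝ≥0∞).toReal := by norm_num
  have hdr : ∀ j, ψ.repr v j = d j := by
    intro j
    rw [hd j, ψ.repr_apply_apply, real_inner_comm]
  have hinner : ∀ (x : H) (j : ℕ), ⟪x, ψ j⟫ = ψ.repr x j := fun x j => by
    rw [real_inner_comm, ψ.repr_apply_apply]
  have parseval : ∀ x : H, Summable (fun j => (ψ.repr x j) ^ 2) ∧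
      ‖x‖ ^ 2 = ∑' j, (ψ.repr x j) ^ 2 := by
    intro x
    have hsum := (lp.memℓp (ψ.repr x)).summable h2
    have hsum2 : Summable (fun j => (ψ.repr x j) ^ 2) := hsum.congr fun j => key2 _
    refine ⟨hsum2, ?_⟩
    have hn : ‖x‖ = ‖ψ.repr x‖ := (ψ.repr.norm_map x).symm
    rw [hn, ← real_inner_self_eq_norm_sq, lp.inner_eq_tsum]
    exact tsum_congr fun j => by simp [RCLike.inner_apply, sq]
  have hdsum : Summable fun j => (d j) ^ 2 :=
    (parseval v).1.congr fun j => by rw [hdr j]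
  have hssum : Summable fun j => (s j) ^ 2 := by
    refine hdsum.of_nonneg_of_le (fun j => sq_nonneg _) fun j => ?_
    have h1 := softThr_abs_le (d j) (hα j)
    calc (s j) ^ 2 = |s j| ^ 2 := (sq_abs _).symm
      _ ≤ |d j| ^ 2 := by nlinarith [abs_nonneg (s j)]
      _ = (d j) ^ 2 := sq_abs _
  have hmem : Memℓp s 2 := memℓp_gen (hssum.congr fun j => (key2 (s j)).symm)
  set w : lp (fun _ : ℕ => ℝ) 2 := ⟨s, hmem⟩ with hwdef
  have hw : ψ.repr (ψ.repr.symm w) = w := ψ.repr.apply_symm_apply w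
  have hus : ustar = ψ.repr.symm w := by
    rw [hustar]
    have hsum := ψ.hasSum_repr (ψ.repr.symm w)
    rw [hw] at hsum
    exact hsum.tsum_eq
  have hcu : ∀ j, ψ.repr ustar j = s j := by
    intro j; rw [hus, hw]
  -- rewrite Ψ coordinatewise
  have hΨ' : ∀ x : H, Ψ x =
      ∑' j, ENNReal.ofReal ((1/2) * (ψ.repr x j - d j) ^ 2 + α j * |ψ.repr x j|) := by
    intro x
    rw [hΨ x]
    have hrepr : ∀ j, ψ.repr (x - v) j = ψ.repr x j - d j := by
      intro j
      rw [map_sub, lp.coeFn_sub, Pi.sub_apply, hdr j]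
    have hsum : Summable fun j => (1/2) * (ψ.repr x j - d j) ^ 2 :=
      ((parseval (x - v)).1.mul_left (1/2)).congr fun j => by rw [hrepr j]
    have h1 : (1/2 : ℝ) * ‖x - v‖ ^ 2 = ∑' j, (1/2) * (ψ.repr x j - d j) ^ 2 := by
      rw [(parseval (x - v)).2, ← tsum_mul_left]
      exact tsum_congr fun j => by rw [hrepr j]
    rw [h1, ENNReal.ofReal_tsum_of_nonneg (fun j => by positivity) hsum, ← ENNReal.tsum_add]
    refine tsum_congr fun j => ?_
    rw [hinner x j, ← ENNReal.ofReal_add (by positivity) (mul_nonneg (hα j).le (abs_nonneg _))]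
  -- finiteness of Ψ ustar
  have hfin : Ψ ustar ≠ ⊤ := by
    rw [hΨ' ustar]
    have hle : ∀ j, ENNReal.ofReal ((1/2) * (ψ.repr ustar j - d j) ^ 2 + α j * |ψ.repr ustar j|)
        ≤ ENNReal.ofReal ((d j) ^ 2) := by
      intro j
      apply ENNReal.ofReal_le_ofReal
      rw [hcu j]
      exact softThr_val_le (d j) (hα j)
    refine ne_top_of_le_ne_top ?_ (ENNReal.tsum_le_tsum hle)
    rw [← ENNReal.ofReal_tsum_of_nonneg (fun j => sq_nonneg _) hdsum]
    exact ENNReal.ofReal_ne_top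
  -- key inequality
  have hkey : ∀ x : H, Ψ ustar + ENNReal.ofReal ((1/2) * ‖x - ustar‖ ^ 2) ≤ Ψ x := by
    intro x
    have hrepr : ∀ j, ψ.repr (x - ustar) j = ψ.repr x j - s j := by
      intro j
      rw [map_sub, lp.coeFn_sub, Pi.sub_apply, hcu j]
    have hsum : Summable fun j => (1/2) * (ψ.repr x j - s j) ^ 2 :=
      ((parseval (x - ustar)).1.mul_left (1/2)).congr fun j => by rw [hrepr j]
    have h1 : (1/2 : ℝ) * ‖x - ustar‖ ^ 2 = ∑' j, (1/2) * (ψ.repr x j - s j) ^ 2 := by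
      rw [(parseval (x - ustar)).2, ← tsum_mul_left]
      exact tsum_congr fun j => by rw [hrepr j]
    rw [hΨ' x, hΨ' ustar, h1,
      ENNReal.ofReal_tsum_of_nonneg (fun j => by positivity) hsum, ← ENNReal.tsum_add]
    refine ENNReal.tsum_le_tsum fun j => ?_
    rw [← ENNReal.ofReal_add
      (add_nonneg (by positivity) (mul_nonneg (hα j).le (abs_nonneg _))) (by positivity)]
    apply ENNReal.ofReal_le_ofReal
    rw [hcu j]
    have := softThr_key (d j) (ψ.repr x j) (hα j)
    simpa [hs] using this
  intro u
  constructor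
  · exact le_trans le_self_add (hkey u)
  · intro h
    have h1 := hkey u
    rw [h] at h1
    have h2' : ENNReal.ofReal ((1/2) * ‖u - ustar‖ ^ 2) ≤ 0 := by
      exact (ENNReal.add_le_add_iff_left hfin).mp
        (le_trans h1 (le_of_eq (add_zero _).symm))
    have h3 : (1/2 : ℝ) * ‖u - ustar‖ ^ 2 ≤ 0 := by
      rwa [le_zero_iff, ENNReal.ofReal_eq_zero] at h2'
    have h4 : ‖u - ustar‖ = 0 := by nlinarith [norm_nonneg (u - ustar), sq_nonneg ‖u - ustar‖]
    rw [← sub_eq_zero]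
    exact norm_eq_zero.mp h4
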